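/- For all integers m, n ≥ 3, the incidence chromatic number of the toroidal grid satisfies χ_i(T_{m,n}) ≥ 5; moreover, χ_i(T_{m,n}) = 5 if and only if m ≡ 0 (mod 5) and n ≡ 0 (mod 5). -/

import Mathlib

open SimpleGraph

/-- The type of incidences of a graph `G`: pairs `(v, e)` where `e` is an edge of `G`
incident to the vertex `v`. -/
def Incidence {V : Type*} (G : SimpleGraph V) : Type _ :=
  {p : V × Sym2 V // p.2 ∈ G.edgeSet ∧ p.1 ∈ p.2}

/-- The graph on the incidences of `G` in which two distinct incidences `(v,e)` and `(w,f)`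
are adjacent iff `v = w`, or `e = f`, or the edge `vw` equals `e` or `f`. -/
def incidenceGraph {V : Type*} (G : SimpleGraph V) : SimpleGraph (Incidence G) where
  Adj i j := i ≠ j ∧
    (i.1.1 = j.1.1 ∨ i.1.2 = j.1.2 ∨ s(i.1.1, j.1.1) = i.1.2 ∨ s(i.1.1, j.1.1) = j.1.2)
  symm := by
    constructor
    rintro ⟨⟨v, e⟩, hi⟩ ⟨⟨w, f⟩, hj⟩ ⟨hne, h⟩
    refine ⟨fun h' => hne h'.symm, ?_⟩
    simp only at h ⊢
    rcases h with h | h | h | h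
    · exact Or.inl h.symm
    · exact Or.inr (Or.inl h.symm)
    · exact Or.inr (Or.inr (Or.inr ((Sym2.eq_swap).trans h)))
    · exact Or.inr (Or.inr (Or.inl ((Sym2.eq_swap).trans h)))
  loopless := ⟨by intro i h; exact h.1 rfl⟩

/-- The incidence chromatic number of a graph: the least number of colors in a proper
coloring of its incidences. -/
noncomputable def incidenceChromaticNumber {V : Type*} (G : SimpleGraph V) : ℕ∞ :=
  (incidenceGraph G).chromaticNumber

/-- The square of a graph `G`: distinct vertices are adjacent iff they are at distance
at most 2 in `G`. -/
def SimpleGraph.square {V : Type*} (G : SimpleGraph V) : SimpleGraph V where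
  Adj u v := u ≠ v ∧ (G.Adj u v ∨ ∃ w, G.Adj u w ∧ G.Adj w v)
  symm := by
    constructor
    rintro u v ⟨hne, h | ⟨w, h1, h2⟩⟩
    · exact ⟨hne.symm, Or.inl h.symm⟩
    · exact ⟨hne.symm, Or.inr ⟨w, h2.symm, h1.symm⟩⟩
  loopless := ⟨by intro v h; exact h.1 rfl⟩

/-- The toroidal grid `T_{m,n} = C_m □ C_n`. -/
def toroidalGrid (m n : ℕ) : SimpleGraph (Fin m × Fin n) :=
  SimpleGraph.boxProd (SimpleGraph.cycleGraph m) (SimpleGraph.cycleGraph n)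


namespace IncAux

open Fin.NatCast

/-- Membership in a 5-element rainbow set. -/
lemma fin5_mem {a b p q r s : Fin 5}
    (hab : a ≠ b) (hap : a ≠ p) (haq : a ≠ q) (har : a ≠ r)
    (hbp : b ≠ p) (hbq : b ≠ q) (hbr : b ≠ r)
    (hpq : p ≠ q) (hpr : p ≠ r) (hqr : q ≠ r)
    (hsa : s ≠ a) (hsb : s ≠ b) : s = p ∨ s = q ∨ s = r := by
  have huniv : ({a, b, p, q, r} : Finset (Fin 5)) = Finset.univ := by
    apply Finset.eq_univ_of_card
    rw [show ({a, b, p, q, r} : Finset (Fin 5)) = insert a (insert b (insert p (insert q {r}))) from rfl]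
    rw [Finset.card_insert_of_notMem (by simp [hab, hap, haq, har]),
      Finset.card_insert_of_notMem (by simp [hbp, hbq, hbr]),
      Finset.card_insert_of_notMem (by simp [hpq, hpr]),
      Finset.card_insert_of_notMem (by simp [hqr])]
    simp
  have : s ∈ ({a, b, p, q, r} : Finset (Fin 5)) := huniv ▸ Finset.mem_univ s
  simp only [Finset.mem_insert, Finset.mem_singleton] at this
  tauto

/-- Two values avoiding four pairwise-distinct values in `Fin 5` are equal. -/
lemma fin5_pigeon {x1 x2 x3 x4 a b : Fin 5}
    (h12 : x1 ≠ x2) (h13 : x1 ≠ x3) (h14 : x1 ≠ x4)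
    (h23 : x2 ≠ x3) (h24 : x2 ≠ x4) (h34 : x3 ≠ x4)
    (ha1 : a ≠ x1) (ha2 : a ≠ x2) (ha3 : a ≠ x3) (ha4 : a ≠ x4)
    (hb1 : b ≠ x1) (hb2 : b ≠ x2) (hb3 : b ≠ x3) (hb4 : b ≠ x4) : a = b := by
  have h := fin5_mem (a := x1) (b := x2) (p := x3) (q := x4) (r := a)
    h12 h13 h14 ha1.symm h23 h24 ha2.symm h34 ha3.symm ha4.symm hb1 hb2
  rcases h with h | h | h
  · exact absurd h hb3
  · exact absurd h hb4
  · exact h.symm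

/-- The trichotomy at the level of `Fin 5` values. -/
lemma fin5_tri {a b p q r s t u : Fin 5}
    (hab : a ≠ b) (hap : a ≠ p) (haq : a ≠ q) (har : a ≠ r)
    (hbp : b ≠ p) (hbq : b ≠ q) (hbr : b ≠ r)
    (hpq : p ≠ q) (hpr : p ≠ r) (hqr : q ≠ r)
    (hsa : s ≠ a) (hsb : s ≠ b) (hta : t ≠ a) (htb : t ≠ b)
    (hua : u ≠ a) (hub : u ≠ b)
    (hst : s ≠ t) (hsu : s ≠ u) (htu : t ≠ u)
    (htq : t ≠ q) (hur : u ≠ r) :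
    (s = p ∧ t = r ∧ u = q) ∨ (s = q ∧ t = r ∧ u = p) ∨ (s = r ∧ t = p ∧ u = q) := by
  have hs := fin5_mem hab hap haq har hbp hbq hbr hpq hpr hqr hsa hsb
  have ht := fin5_mem hab hap haq har hbp hbq hbr hpq hpr hqr hta htb
  have hu := fin5_mem hab hap haq har hbp hbq hbr hpq hpr hqr hua hub
  rcases hs with rfl | rfl | rfl <;> rcases ht with rfl | rfl | rfl <;>
    rcases hu with rfl | rfl | rfl <;> tauto



section Master

variable {G : Type*} [AddCommGroup G]

/-- Rainbow condition at `v`: the five colors on the plus centered at `v` are distinct. -/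
def Rb (c : G → Fin 5) (x y : G) (v : G) : Prop :=
  c (v + x) ≠ c v ∧ c (v - x) ≠ c v ∧ c (v + y) ≠ c v ∧ c (v - y) ≠ c v ∧
  c (v + x) ≠ c (v - x) ∧ c (v + x) ≠ c (v + y) ∧ c (v + x) ≠ c (v - y) ∧
  c (v - x) ≠ c (v + y) ∧ c (v - x) ≠ c (v - y) ∧ c (v + y) ≠ c (v - y)

variable {c : G → Fin 5} {x y : G}

lemma Rb.swap {v : G} (h : Rb c x y v) : Rb c y x v := by
  obtain ⟨h1, h2, h3, h4, h5, h6, h7, h8, h9, h10⟩ := h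
  exact ⟨h3, h4, h1, h2, h10, h6.symm, h8.symm, h7.symm, h9.symm, h5⟩

def Dxy (c : G → Fin 5) (x y : G) (v : G) : Prop := c (v + x + y) = c (v - y)
def Dyx (c : G → Fin 5) (x y : G) (v : G) : Prop := c (v + x + y) = c (v - x)

lemma dxy_swap {v : G} : Dxy c y x v ↔ Dyx c x y v := by
  unfold Dxy Dyx; rw [show v + y + x = v + x + y by abel]

lemma dyx_swap {v : G} : Dyx c y x v ↔ Dxy c x y v := by
  unfold Dxy Dyx; rw [show v + y + x = v + x + y by abel]

/-- The trichotomy lemma at a vertex. -/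
lemma tri (hrb : ∀ v, Rb c x y v) (v : G) :
    (c (v + x + x) = c (v - x) ∧ c (v + x + y) = c (v - y) ∧ c (v + x - y) = c (v + y)) ∨
    (c (v + x + x) = c (v + y) ∧ c (v + x + y) = c (v - y) ∧ c (v + x - y) = c (v - x)) ∨
    (c (v + x + x) = c (v - y) ∧ c (v + x + y) = c (v - x) ∧ c (v + x - y) = c (v + y)) := by
  obtain ⟨h1, h2, h3, h4, h5, h6, h7, h8, h9, h10⟩ := hrb v
  obtain ⟨g1, g2, g3, g4, g5, g6, g7, g8, g9, g10⟩ := hrb (v + x)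
  have e1 : v + x - x = v := by abel
  have e2 : v + x + x = v + x + x := rfl
  rw [e1] at g2 g5 g8 g9
  -- g: c(v+x+x) ≠ c(v+x) (g1), c v ≠ c (v+x) (g2) , c(v+x+y)≠c(v+x) (g3), c(v+x-y)≠c(v+x) (g4),
  --    c(v+x+x) ≠ c v (g5), c(v+x+x)≠c(v+x+y) (g6), c(v+x+x)≠c(v+x-y) (g7),
  --    c v ≠ c(v+x+y) (g8), c v ≠ c(v+x-y) (g9), c(v+x+y) ≠ c(v+x-y) (g10)
  have htq : c (v + x + y) ≠ c (v + y) := by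
    have := (hrb (v + y)).1
    rwa [show v + y + x = v + x + y by abel] at this
  have hur : c (v + x - y) ≠ c (v - y) := by
    have := (hrb (v - y)).1
    rwa [show v - y + x = v + x - y by abel] at this
  exact fin5_tri h1.symm h2.symm h3.symm h4.symm h5 h6 h7 h8 h9 h10 g5 g1 g8.symm g3
    g9.symm g4 g6 g7 g10 htq hur


lemma tri' (hrb : ∀ v, Rb c x y v) (v : G) : Dxy c x y v ∨ Dyx c x y v := by
  rcases tri hrb v with ⟨_, h, _⟩ | ⟨_, h, _⟩ | ⟨_, h, _⟩
  · exact Or.inl h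
  · exact Or.inl h
  · exact Or.inr h

lemma not_both (hrb : ∀ v, Rb c x y v) (v : G) : ¬ (Dxy c x y v ∧ Dyx c x y v) := by
  rintro ⟨h1, h2⟩
  exact (hrb v).2.2.2.2.2.2.2.2.1 (h2.symm.trans h1)

/-- Propagation: the `Dyx` chirality propagates in the `x` direction. -/
lemma prop_x (hrb : ∀ v, Rb c x y v) (v : G) (h : Dyx c x y v) : Dyx c x y (v + x) := by
  -- first, case C holds at v, giving c (v + x - y) = c (v + y)
  have hC : c (v + x - y) = c (v + y) := by
    rcases tri hrb v with ⟨_, h2, _⟩ | ⟨_, h2, _⟩ | ⟨_, _, h3⟩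
    · exact absurd (h.symm.trans h2) (hrb v).2.2.2.2.2.2.2.2.1
    · exact absurd (h.symm.trans h2) (hrb v).2.2.2.2.2.2.2.2.1
    · exact h3
  rcases tri' hrb (v + x) with h' | h'
  · exfalso
    -- h' : c (v+x+x+y) = c (v+x-y) = c (v+y); contradicts rainbow at v+x+y
    have hrr := (hrb (v + x + y)).1
    rw [show v + x + y + x = v + x + x + y by abel] at hrr
    have h5 := (hrb (v + x + y)).2.1
    rw [show v + x + y - x = v + y by abel] at h5
    have := (hrb (v + x + y)).2.2.2.2.1
    rw [show v + x + y + x = v + x + x + y by abel,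
        show v + x + y - x = v + y by abel] at this
    exact this (h'.trans hC)
  · exact h'

/-- Propagation of `Dxy` in the `y` direction (by symmetry). -/
lemma prop_y (hrb : ∀ v, Rb c x y v) (v : G) (h : Dxy c x y v) : Dxy c x y (v + y) := by
  have hs : ∀ w, Rb c y x w := fun w => (hrb w).swap
  have := prop_x hs v (dyx_swap.mpr h)
  exact dyx_swap.mp this

/-- Backward propagation of `Dxy` in the `x` direction. -/
lemma prop_x_back (hrb : ∀ v, Rb c x y v) (v : G) (h : Dxy c x y v) : Dxy c x y (v - x) := by
  rcases tri' hrb (v - x) with h' | h'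
  · exact h'
  · exfalso
    have := prop_x hrb (v - x) h'
    rw [sub_add_cancel] at this
    exact not_both hrb v ⟨h, this⟩

lemma spread (hrb : ∀ v, Rb c x y v) (v : G) (h : Dxy c x y v) (a b : ℕ) :
    Dxy c x y (v - a • x + b • y) := by
  induction b with
  | zero =>
    simp only [zero_smul, add_zero]
    induction a with
    | zero => simpa using h
    | succ a ih =>
      have := prop_x_back hrb _ ih
      rw [show v - a • x - x = v - (a+1) • x by rw [succ_nsmul]; abel] at this
      exact this
  | succ b ih =>
    have := prop_y hrb _ ih
    rw [show v - a • x + b • y + y = v - a • x + (b+1) • y by rw [succ_nsmul]; abel] at this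
    exact this

/-- From `Dxy` everywhere, derive the two invariances and the period-5 conclusion. -/
lemma final (hrb : ∀ v, Rb c x y v) (hall : ∀ v, Dxy c x y v) :
    ∀ v, c (v + x + x + x + x + x) = c v ∧ c (v + y + y + y + y + y) = c v := by
  -- invariance under x + 2y
  have H1 : ∀ w : G, c (w + x + y + y) = c w := by
    intro w
    have := hall (w + y)
    unfold Dxy at this
    rwa [show w + y + x + y = w + x + y + y by abel, show w + y - y = w by abel] at this
  -- invariance under 2x - y
  have H2 : ∀ w : G, c (w + x + x - y) = c w := by
    intro w
    have hB : c (w - y + x + x) = c (w - y + y) := by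
      rcases tri hrb (w - y) with ⟨h1, h2, h3⟩ | ⟨h1, h2, h3⟩ | ⟨h1, h2, h3⟩
      · -- case A: contradiction
        exfalso
        have e1 : c (w - y + x + x + y) = c (w - y + y) := by
          have := H1 (w - y + x - y)
          rw [show w - y + x - y + x + y + y = w - y + x + x + y by abel] at this
          rw [this, h3]
        have := (hrb (w - y + x + y)).2.2.2.2.1
        rw [show w - y + x + y + x = w - y + x + x + y by abel,
            show w - y + x + y - x = w - y + y by abel] at this
        exact this e1
      · exact h1
      · -- case C: contradicts Dxy at w - y
        exfalso
        exact not_both hrb (w - y) ⟨hall (w - y), h2⟩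
    have := hB
    rwa [show w - y + x + x = w + x + x - y by abel, show w - y + y = w by abel] at this
  intro v
  constructor
  · have e : v + x + x + x + x + x = (((v + x + x - y) + x + x - y) + x + y + y) := by abel
    rw [e, H1, H2, H2]
  · have e : v + y + y + y + y + y + x + x - y = (v + x + y + y) + x + y + y := by abel
    have h0 := H2 (v + y + y + y + y + y)
    rw [e, H1, H1] at h0
    exact h0.symm

/-- The master rigidity lemma. -/
lemma master (hrb : ∀ v, Rb c x y v)
    (hgen : ∀ g : G, ∃ a b : ℕ, g + a • x = b • y) :
    ∀ v, c (v + x + x + x + x + x) = c v ∧ c (v + y + y + y + y + y) = c v := by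
  by_cases hall : ∀ v, Dxy c x y v
  · exact final hrb hall
  · have hyx : ∀ v, Dyx c x y v := by
      push_neg at hall
      obtain ⟨w, hw⟩ := hall
      intro v
      rcases tri' hrb v with hv | hv
      · exfalso
        obtain ⟨a, b, hab⟩ := hgen (w - v)
        have := spread hrb v hv a b
        rw [show v - a • x + b • y = w by rw [← hab]; abel] at this
        exact hw this
      · exact hv
    have hswap : ∀ v, Dxy c y x v := fun v => dxy_swap.mpr (hyx v)
    have := final (fun w => (hrb w).swap) hswap
    exact fun v => ⟨(this v).2, (this v).1⟩

end Master

section Torus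
variable {m n : ℕ}

def E1 : Fin (m+3) × Fin (n+3) := (1, 0)
def E2 : Fin (m+3) × Fin (n+3) := (0, 1)

lemma cyc_adj {k : ℕ} {a b : Fin (k+3)} :
    (cycleGraph (k+3)).Adj a b ↔ b = a + 1 ∨ b = a - 1 := by
  have h := cycleGraph_adj (n := k+1) (u := a) (v := b)
  rw [h]
  constructor
  · rintro (h | h)
    · right; rw [← h]; abel
    · left; rw [← h]; abel
  · rintro (h | h)
    · right; rw [h]; abel
    · left; rw [h]; abel

lemma adj_iff {v u : Fin (m+3) × Fin (n+3)} :
    (toroidalGrid (m+3) (n+3)).Adj v u ↔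
      u = v + E1 ∨ u = v - E1 ∨ u = v + E2 ∨ u = v - E2 := by
  obtain ⟨a, b⟩ := v
  obtain ⟨c, d⟩ := u
  show (SimpleGraph.boxProd _ _).Adj _ _ ↔ _
  rw [boxProd_adj]
  simp only [cyc_adj, Prod.ext_iff, E1, E2, Prod.mk_add_mk, Prod.mk_sub_mk,
    add_zero, sub_zero]
  constructor
  · rintro (⟨h | h, h2⟩ | ⟨h | h, h2⟩)
    · exact Or.inl ⟨h, h2.symm⟩
    · exact Or.inr (Or.inl ⟨h, h2.symm⟩)
    · exact Or.inr (Or.inr (Or.inl ⟨h2.symm, h⟩))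
    · exact Or.inr (Or.inr (Or.inr ⟨h2.symm, h⟩))
  · rintro (⟨h1, h2⟩ | ⟨h1, h2⟩ | ⟨h1, h2⟩ | ⟨h1, h2⟩)
    · exact Or.inl ⟨Or.inl h1, h2.symm⟩
    · exact Or.inl ⟨Or.inr h1, h2.symm⟩
    · exact Or.inr ⟨Or.inl h2, h1.symm⟩
    · exact Or.inr ⟨Or.inr h2, h1.symm⟩

lemma fin_one_ne_zero {k : ℕ} : (1 : Fin (k+3)) ≠ 0 := by
  intro h
  have h1 : (1 : Fin (k+3)).val = 1 := Fin.val_one (k+1)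
  rw [h] at h1
  simp at h1

lemma fin_two_ne_zero {k : ℕ} : (1 : Fin (k+3)) + 1 ≠ 0 := by
  intro h
  have h2 : ((2 : ℕ) : Fin (k+3)) = 0 := by rw [← h]; norm_num
  have := congrArg Fin.val h2
  rw [Fin.val_natCast, Nat.mod_eq_of_lt (by omega)] at this
  simp at this

lemma hE1_ne_zero : (E1 : Fin (m+3) × Fin (n+3)) ≠ 0 :=
  fun h => fin_one_ne_zero (congrArg Prod.fst h)
lemma hE2_ne_zero : (E2 : Fin (m+3) × Fin (n+3)) ≠ 0 :=
  fun h => fin_one_ne_zero (congrArg Prod.snd h)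
lemma hE1_ne_neg : (E1 : Fin (m+3) × Fin (n+3)) ≠ -E1 := by
  intro h
  have h2 : (E1 : Fin (m+3) × Fin (n+3)) + E1 = 0 := by
    nth_rewrite 2 [h]; exact add_neg_cancel E1
  exact fin_two_ne_zero (congrArg Prod.fst h2)
lemma hE2_ne_neg : (E2 : Fin (m+3) × Fin (n+3)) ≠ -E2 := by
  intro h
  have h2 : (E2 : Fin (m+3) × Fin (n+3)) + E2 = 0 := by
    nth_rewrite 2 [h]; exact add_neg_cancel E2
  exact fin_two_ne_zero (congrArg Prod.snd h2)
lemma hE1_ne_E2 : (E1 : Fin (m+3) × Fin (n+3)) ≠ E2 :=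
  fun h => fin_one_ne_zero (congrArg Prod.fst h)
lemma hE1_ne_negE2 : (E1 : Fin (m+3) × Fin (n+3)) ≠ -E2 := by
  intro h
  have h1 := congrArg Prod.fst h
  simp only [E1, E2, Prod.fst_neg, neg_zero] at h1
  exact fin_one_ne_zero h1
lemma hnE1_ne_E2 : -(E1 : Fin (m+3) × Fin (n+3)) ≠ E2 := by
  intro h
  have h1 := congrArg Prod.snd h
  simp only [E1, E2, Prod.snd_neg, neg_zero] at h1
  exact fin_one_ne_zero h1.symm
lemma hnE1_ne_nE2 : -(E1 : Fin (m+3) × Fin (n+3)) ≠ -E2 := by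
  intro h
  rw [neg_inj] at h
  exact hE1_ne_E2 h

end Torus

section Incid
variable {m n : ℕ}

/-- The incidence at vertex `u` along the edge to `v`. -/
def inc (u v : Fin (m+3) × Fin (n+3)) (h : (toroidalGrid (m+3) (n+3)).Adj u v) :
    Incidence (toroidalGrid (m+3) (n+3)) :=
  ⟨(u, s(u, v)), (SimpleGraph.mem_edgeSet _).mpr h, Sym2.mem_mk_left u v⟩

lemma adj_same_vertex {u v w : Fin (m+3) × Fin (n+3)}
    (h1 : (toroidalGrid (m+3) (n+3)).Adj u v) (h2 : (toroidalGrid (m+3) (n+3)).Adj u w)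
    (hvw : v ≠ w) :
    (incidenceGraph (toroidalGrid (m+3) (n+3))).Adj (inc u v h1) (inc u w h2) := by
  constructor
  · intro h
    have := congrArg (fun i => i.1.2) h
    simp only [inc, Sym2.eq, Sym2.rel_iff', Prod.mk.injEq, Prod.swap_prod_mk] at this
    rcases this with ⟨_, h'⟩ | ⟨_, h'⟩
    · exact hvw h'
    · exact h1.ne' h'
  · exact Or.inl rfl

lemma adj_point {u v w : Fin (m+3) × Fin (n+3)}
    (h1 : (toroidalGrid (m+3) (n+3)).Adj u v) (h2 : (toroidalGrid (m+3) (n+3)).Adj v w) :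
    (incidenceGraph (toroidalGrid (m+3) (n+3))).Adj (inc u v h1) (inc v w h2) := by
  constructor
  · intro h
    have := congrArg (fun i => i.1.1) h
    exact h1.ne this
  · exact Or.inr (Or.inr (Or.inl rfl))

variable (C : (incidenceGraph (toroidalGrid (m+3) (n+3))).Coloring (Fin 5))

lemma adj_vE1 (v : Fin (m+3) × Fin (n+3)) : (toroidalGrid (m+3) (n+3)).Adj v (v + E1) :=
  adj_iff.mpr (Or.inl rfl)
lemma adj_vE1' (v : Fin (m+3) × Fin (n+3)) : (toroidalGrid (m+3) (n+3)).Adj v (v - E1) :=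
  adj_iff.mpr (Or.inr (Or.inl rfl))
lemma adj_vE2 (v : Fin (m+3) × Fin (n+3)) : (toroidalGrid (m+3) (n+3)).Adj v (v + E2) :=
  adj_iff.mpr (Or.inr (Or.inr (Or.inl rfl)))
lemma adj_vE2' (v : Fin (m+3) × Fin (n+3)) : (toroidalGrid (m+3) (n+3)).Adj v (v - E2) :=
  adj_iff.mpr (Or.inr (Or.inr (Or.inr rfl)))

/-- The color assigned to a vertex: the common color of all incidences pointing at it. -/
def sig (v : Fin (m+3) × Fin (n+3)) : Fin 5 := C (inc (v + E1) v (adj_vE1 v).symm)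

/-- All incidences pointing at `v` have the same color. -/
lemma sig_spec {u v : Fin (m+3) × Fin (n+3)} (h : (toroidalGrid (m+3) (n+3)).Adj u v) :
    C (inc u v h) = sig C v := by
  -- the four incidences at v
  have q1 := adj_vE1 v
  have q2 := adj_vE1' v
  have q3 := adj_vE2 v
  have q4 := adj_vE2' v
  have d12 : v + E1 ≠ v - E1 := by
    rw [sub_eq_add_neg]; intro h'; exact hE1_ne_neg (add_left_cancel h')
  have d13 : v + E1 ≠ v + E2 := fun h' => hE1_ne_E2 (add_left_cancel h')
  have d14 : v + E1 ≠ v - E2 := by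
    rw [sub_eq_add_neg]; intro h'; exact hE1_ne_negE2 (add_left_cancel h')
  have d23 : v - E1 ≠ v + E2 := by
    rw [sub_eq_add_neg]; intro h'; exact hnE1_ne_E2 (add_left_cancel h')
  have d24 : v - E1 ≠ v - E2 := by
    rw [sub_eq_add_neg, sub_eq_add_neg]; intro h'; exact hnE1_ne_nE2 (add_left_cancel h')
  have d34 : v + E2 ≠ v - E2 := by
    rw [sub_eq_add_neg]; intro h'; exact hE2_ne_neg (add_left_cancel h')
  exact fin5_pigeon
    (C.valid (adj_same_vertex q1 q2 d12)) (C.valid (adj_same_vertex q1 q3 d13))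
    (C.valid (adj_same_vertex q1 q4 d14)) (C.valid (adj_same_vertex q2 q3 d23))
    (C.valid (adj_same_vertex q2 q4 d24)) (C.valid (adj_same_vertex q3 q4 d34))
    (C.valid (adj_point h q1)) (C.valid (adj_point h q2))
    (C.valid (adj_point h q3)) (C.valid (adj_point h q4))
    (C.valid (adj_point (adj_vE1 v).symm q1)) (C.valid (adj_point (adj_vE1 v).symm q2))
    (C.valid (adj_point (adj_vE1 v).symm q3)) (C.valid (adj_point (adj_vE1 v).symm q4))

/-- Distinct colors: center versus a neighbor. -/
lemma sig_ne_nbr {v u : Fin (m+3) × Fin (n+3)} (h : (toroidalGrid (m+3) (n+3)).Adj v u) :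
    sig C u ≠ sig C v := by
  rw [← sig_spec C h, ← sig_spec C h.symm]
  exact C.valid (adj_point h h.symm)

/-- Distinct colors: two distinct neighbors of a common vertex. -/
lemma sig_ne_two {v u w : Fin (m+3) × Fin (n+3)} (h1 : (toroidalGrid (m+3) (n+3)).Adj v u)
    (h2 : (toroidalGrid (m+3) (n+3)).Adj v w) (huw : u ≠ w) : sig C u ≠ sig C w := by
  rw [← sig_spec C h1, ← sig_spec C h2]
  exact C.valid (adj_same_vertex h1 h2 huw)

lemma sig_rb : ∀ v, Rb (sig C) E1 E2 v := by
  intro v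
  have q1 := adj_vE1 v
  have q2 := adj_vE1' v
  have q3 := adj_vE2 v
  have q4 := adj_vE2' v
  have d12 : v + E1 ≠ v - E1 := by
    rw [sub_eq_add_neg]; intro h'; exact hE1_ne_neg (add_left_cancel h')
  have d13 : v + E1 ≠ v + E2 := fun h' => hE1_ne_E2 (add_left_cancel h')
  have d14 : v + E1 ≠ v - E2 := by
    rw [sub_eq_add_neg]; intro h'; exact hE1_ne_negE2 (add_left_cancel h')
  have d23 : v - E1 ≠ v + E2 := by
    rw [sub_eq_add_neg]; intro h'; exact hnE1_ne_E2 (add_left_cancel h')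
  have d24 : v - E1 ≠ v - E2 := by
    rw [sub_eq_add_neg, sub_eq_add_neg]; intro h'; exact hnE1_ne_nE2 (add_left_cancel h')
  have d34 : v + E2 ≠ v - E2 := by
    rw [sub_eq_add_neg]; intro h'; exact hE2_ne_neg (add_left_cancel h')
  exact ⟨sig_ne_nbr C q1, sig_ne_nbr C q2, sig_ne_nbr C q3, sig_ne_nbr C q4,
    sig_ne_two C q1 q2 d12, sig_ne_two C q1 q3 d13, sig_ne_two C q1 q4 d14,
    sig_ne_two C q2 q3 d23, sig_ne_two C q2 q4 d24, sig_ne_two C q3 q4 d34⟩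

end Incid

section Gen
variable {m n : ℕ}

lemma smul_E1 (a : ℕ) : a • (E1 : Fin (m+3) × Fin (n+3)) = ((a : Fin (m+3)), 0) := by
  induction a with
  | zero => simp; rfl
  | succ a ih =>
    rw [succ_nsmul, ih]
    apply Prod.ext
    · show (a : Fin (m+3)) + 1 = ((a+1 : ℕ) : Fin (m+3))
      push_cast; ring
    · show (0 : Fin (n+3)) + 0 = 0
      simp

lemma smul_E2 (a : ℕ) : a • (E2 : Fin (m+3) × Fin (n+3)) = (0, (a : Fin (n+3))) := by
  induction a with
  | zero => simp; rfl
  | succ a ih =>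
    rw [succ_nsmul, ih]
    apply Prod.ext
    · show (0 : Fin (m+3)) + 0 = 0
      simp
    · show (a : Fin (n+3)) + 1 = ((a+1 : ℕ) : Fin (n+3))
      push_cast; ring

lemma fin_add_compl {k : ℕ} (a : Fin (k+3)) :
    a + ((k + 3 - a.val : ℕ) : Fin (k+3)) = 0 := by
  have h0 : ((a.val + (k + 3 - a.val) : ℕ) : Fin (k+3)) = 0 := by
    rw [show a.val + (k + 3 - a.val) = k+3 by omega, Fin.natCast_self]
  rw [Nat.cast_add] at h0
  rwa [Fin.cast_val_eq_self] at h0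

lemma hgen : ∀ g : Fin (m+3) × Fin (n+3), ∃ a b : ℕ, g + a • E1 = b • E2 := by
  intro g
  obtain ⟨g1, g2⟩ := g
  refine ⟨m + 3 - g1.val, g2.val, ?_⟩
  simp only [smul_E1, smul_E2, Prod.mk_add_mk, Prod.mk.injEq]
  constructor
  · exact fin_add_compl g1
  · rw [add_zero, Fin.cast_val_eq_self]

lemma fin_inv_period {k : ℕ} (hk : (k+3) % 5 ≠ 0) :
    ∃ j : ℕ, ((j * 5 : ℕ) : Fin (k+3)) = 1 := by
  have hcop : Nat.Coprime 5 (k+3) :=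
    (Nat.Prime.coprime_iff_not_dvd (by norm_num)).mpr
      (fun hdvd => hk (Nat.dvd_iff_mod_eq_zero.mp hdvd))
  obtain ⟨j, -, hj⟩ := Nat.exists_mul_mod_eq_one_of_coprime hcop (by omega)
  refine ⟨j, ?_⟩
  apply Fin.ext
  rw [Fin.val_natCast, mul_comm, hj]
  exact (Fin.val_one (k+1)).symm

/-- From a 5-coloring of the incidences, both sides are divisible by 5. -/
lemma fwd (C : (incidenceGraph (toroidalGrid (m+3) (n+3))).Coloring (Fin 5)) :
    (m+3) % 5 = 0 ∧ (n+3) % 5 = 0 := by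
  have h := master (sig_rb C) hgen
  constructor
  · by_contra hm5
    obtain ⟨j, hj⟩ := fin_inv_period hm5
    have P : ∀ v, sig C (v + (5 • (E1 : Fin (m+3) × Fin (n+3)))) = sig C v := by
      intro v
      have := (h v).1
      rwa [show v + E1 + E1 + E1 + E1 + E1 = v + 5 • E1 by abel] at this
    have it : ∀ (t : ℕ) v, sig C (v + t • (5 • (E1 : Fin (m+3) × Fin (n+3)))) = sig C v := by
      intro t
      induction t with
      | zero => simp
      | succ t ih =>
        intro v
        rw [show v + (t+1) • (5 • (E1 : Fin (m+3) × Fin (n+3)))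
            = (v + t • (5 • E1)) + 5 • E1 by rw [succ_nsmul]; abel, P, ih]
    have key : ∀ v, sig C (v + E1) = sig C v := by
      intro v
      have := it j v
      rwa [smul_smul, smul_E1, hj] at this
    exact (sig_rb C 0).1 (key 0)
  · by_contra hn5
    obtain ⟨j, hj⟩ := fin_inv_period hn5
    have P : ∀ v, sig C (v + (5 • (E2 : Fin (m+3) × Fin (n+3)))) = sig C v := by
      intro v
      have := (h v).2
      rwa [show v + E2 + E2 + E2 + E2 + E2 = v + 5 • E2 by abel] at this
    have it : ∀ (t : ℕ) v, sig C (v + t • (5 • (E2 : Fin (m+3) × Fin (n+3)))) = sig C v := by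
      intro t
      induction t with
      | zero => simp
      | succ t ih =>
        intro v
        rw [show v + (t+1) • (5 • (E2 : Fin (m+3) × Fin (n+3)))
            = (v + t • (5 • E2)) + 5 • E2 by rw [succ_nsmul]; abel, P, ih]
    have key : ∀ v, sig C (v + E2) = sig C v := by
      intro v
      have := it j v
      rwa [smul_smul, smul_E2, hj] at this
    exact (sig_rb C 0).2.2.1 (key 0)

end Gen

section Back
variable {m n : ℕ}

def tau (v : Fin (m+3) × Fin (n+3)) : ZMod 5 := ((v.1.val + 2 * v.2.val : ℕ) : ZMod 5)

lemma cast_mod {K : ℕ} (hK : (5:ℕ) ∣ K) (x : ℕ) : ((x % K : ℕ) : ZMod 5) = (x : ZMod 5) := by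
  conv_rhs => rw [← Nat.div_add_mod x K]
  push_cast
  rw [(ZMod.natCast_eq_zero_iff K 5).mpr hK]
  ring

lemma val_add_cast {k : ℕ} (hk : (5:ℕ) ∣ (k+3)) (a b : Fin (k+3)) :
    (((a+b).val : ℕ) : ZMod 5) = ((a.val : ℕ) : ZMod 5) + ((b.val : ℕ) : ZMod 5) := by
  have h : (a + b) = ((a.val + b.val : ℕ) : Fin (k+3)) := by
    rw [Nat.cast_add, Fin.cast_val_eq_self, Fin.cast_val_eq_self]
  rw [h, Fin.val_natCast, cast_mod hk, Nat.cast_add]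

lemma tau_add (hm : (5:ℕ) ∣ (m+3)) (hn : (5:ℕ) ∣ (n+3)) (v w : Fin (m+3) × Fin (n+3)) :
    tau (v + w) = tau v + tau w := by
  unfold tau
  rw [Prod.fst_add, Prod.snd_add]
  push_cast
  rw [val_add_cast hm, val_add_cast hn]
  ring

lemma tau_zero : tau (0 : Fin (m+3) × Fin (n+3)) = 0 := by
  unfold tau; simp

lemma tau_E1 : tau (E1 : Fin (m+3) × Fin (n+3)) = 1 := by
  unfold tau E1
  have h1 : (1 : Fin (m+3)).val = 1 := Fin.val_one (m+1)
  simp [h1]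

lemma tau_E2 : tau (E2 : Fin (m+3) × Fin (n+3)) = 2 := by
  unfold tau E2
  have h1 : (1 : Fin (n+3)).val = 1 := Fin.val_one (n+1)
  simp [h1]

lemma tau_nE1 (hm : (5:ℕ) ∣ (m+3)) (hn : (5:ℕ) ∣ (n+3)) :
    tau (-E1 : Fin (m+3) × Fin (n+3)) = -1 := by
  have h := tau_add hm hn (-E1) E1
  rw [neg_add_cancel, tau_zero, tau_E1] at h
  exact eq_neg_of_add_eq_zero_left h.symm

lemma tau_nE2 (hm : (5:ℕ) ∣ (m+3)) (hn : (5:ℕ) ∣ (n+3)) :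
    tau (-E2 : Fin (m+3) × Fin (n+3)) = -2 := by
  have h := tau_add hm hn (-E2) E2
  rw [neg_add_cancel, tau_zero, tau_E2] at h
  exact eq_neg_of_add_eq_zero_left h.symm

lemma tau_nbr_ne (hm : (5:ℕ) ∣ (m+3)) (hn : (5:ℕ) ∣ (n+3))
    {v u : Fin (m+3) × Fin (n+3)} (h : (toroidalGrid (m+3) (n+3)).Adj v u) :
    tau u ≠ tau v := by
  rcases adj_iff.mp h with rfl | rfl | rfl | rfl <;>
    · simp only [sub_eq_add_neg, tau_add hm hn, tau_E1, tau_E2, tau_nE1 hm hn, tau_nE2 hm hn]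
      intro hEq
      have h2 := add_eq_left.mp hEq
      revert h2
      decide

lemma tau_nbrs_ne (hm : (5:ℕ) ∣ (m+3)) (hn : (5:ℕ) ∣ (n+3))
    {v u z : Fin (m+3) × Fin (n+3)} (h1 : (toroidalGrid (m+3) (n+3)).Adj v u)
    (h2 : (toroidalGrid (m+3) (n+3)).Adj v z) (huz : u ≠ z) : tau u ≠ tau z := by
  rcases adj_iff.mp h1 with rfl | rfl | rfl | rfl <;>
    rcases adj_iff.mp h2 with rfl | rfl | rfl | rfl <;>
    first
      | exact absurd rfl huz
      | · simp only [sub_eq_add_neg, tau_add hm hn, tau_E1, tau_E2, tau_nE1 hm hn, tau_nE2 hm hn]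
          intro hEq
          have h3 := add_left_cancel hEq
          revert h3
          decide

def colB (i : Incidence (toroidalGrid (m+3) (n+3))) : ZMod 5 :=
  tau (Sym2.Mem.other' i.2.2)

lemma colB_valid (hm : (5:ℕ) ∣ (m+3)) (hn : (5:ℕ) ∣ (n+3))
    {i j : Incidence (toroidalGrid (m+3) (n+3))}
    (hadj : (incidenceGraph (toroidalGrid (m+3) (n+3))).Adj i j) : colB i ≠ colB j := by
  obtain ⟨⟨v, e⟩, he, hv⟩ := i
  obtain ⟨⟨w, f⟩, hf, hw⟩ := j
  obtain ⟨hne, hcase⟩ := hadj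
  show tau (Sym2.Mem.other' hv) ≠ tau (Sym2.Mem.other' hw)
  set u := Sym2.Mem.other' hv with hu_def
  set z := Sym2.Mem.other' hw with hz_def
  have hspec_u : s(v, u) = e := Sym2.other_spec' hv
  have hspec_z : s(w, z) = f := Sym2.other_spec' hw
  have hadj_u : (toroidalGrid (m+3) (n+3)).Adj v u := by
    rw [← hspec_u] at he
    exact (SimpleGraph.mem_edgeSet _).mp he
  have hadj_z : (toroidalGrid (m+3) (n+3)).Adj w z := by
    rw [← hspec_z] at hf
    exact (SimpleGraph.mem_edgeSet _).mp hf
  simp only at hcase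
  rcases hcase with hvw | hef | hsw | hsw
  · -- same vertex
    subst hvw
    have huz : u ≠ z := by
      intro h
      apply hne
      have hef2 : e = f := by rw [← hspec_u, ← hspec_z, h]
      apply Subtype.ext
      show (v, e) = (v, f)
      rw [hef2]
    exact tau_nbrs_ne hm hn hadj_u hadj_z huz
  · -- same edge
    have hs : s(v, u) = s(w, z) := by rw [hspec_u, hspec_z, hef]
    rw [Sym2.eq_iff] at hs
    rcases hs with ⟨h1, h2⟩ | ⟨h1, h2⟩
    · exfalso
      apply hne
      apply Subtype.ext
      show (v, e) = (w, f)
      rw [h1, hef]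
    · -- h1 : v = z, h2 : u = w
      subst h2
      exact (tau_nbr_ne hm hn hadj_z).symm
  · -- s(v,w) = e
    have hs : s(v, w) = s(v, u) := by rw [hspec_u, hsw]
    rw [Sym2.eq_iff] at hs
    rcases hs with ⟨h1, h2⟩ | ⟨h1, h2⟩
    · subst h2
      exact (tau_nbr_ne hm hn hadj_z).symm
    · exact absurd h1 hadj_u.ne
  · -- s(v,w) = f
    have hs : s(v, w) = s(w, z) := by rw [hspec_z, hsw]
    rw [Sym2.eq_iff] at hs
    rcases hs with ⟨h1, h2⟩ | ⟨h1, h2⟩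
    · have hvz : v = z := h1.trans h2
      subst hvz
      exact tau_nbr_ne hm hn hadj_u
    · subst h1
      exact tau_nbr_ne hm hn hadj_u

/-- The explicit incidence 5-coloring when `5 ∣ m+3` and `5 ∣ n+3`. -/
lemma colorable_of_dvd (hm : (5:ℕ) ∣ (m+3)) (hn : (5:ℕ) ∣ (n+3)) :
    (incidenceGraph (toroidalGrid (m+3) (n+3))).Colorable 5 := by
  have coloring : (incidenceGraph (toroidalGrid (m+3) (n+3))).Coloring (ZMod 5) :=
    SimpleGraph.Coloring.mk colB (fun h => colB_valid hm hn h)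
  have := coloring.colorable
  rwa [ZMod.card] at this

end Back




section LB
variable {m n : ℕ}

lemma not_cliqueFree : ¬ (incidenceGraph (toroidalGrid (m+3) (n+3))).CliqueFree 5 := by
  classical
  set v0 : Fin (m+3) × Fin (n+3) := 0 with hv0
  have q1 := adj_vE1 v0
  have q2 := adj_vE1' v0
  have q3 := adj_vE2 v0
  have q4 := adj_vE2' v0
  have d12 : v0 + E1 ≠ v0 - E1 := by
    rw [sub_eq_add_neg]; intro h'; exact hE1_ne_neg (add_left_cancel h')
  have d13 : v0 + E1 ≠ v0 + E2 := fun h' => hE1_ne_E2 (add_left_cancel h')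
  have d14 : v0 + E1 ≠ v0 - E2 := by
    rw [sub_eq_add_neg]; intro h'; exact hE1_ne_negE2 (add_left_cancel h')
  have d23 : v0 - E1 ≠ v0 + E2 := by
    rw [sub_eq_add_neg]; intro h'; exact hnE1_ne_E2 (add_left_cancel h')
  have d24 : v0 - E1 ≠ v0 - E2 := by
    rw [sub_eq_add_neg, sub_eq_add_neg]; intro h'; exact hnE1_ne_nE2 (add_left_cancel h')
  have d34 : v0 + E2 ≠ v0 - E2 := by
    rw [sub_eq_add_neg]; intro h'; exact hE2_ne_neg (add_left_cancel h')
  set i1 := inc v0 (v0 + E1) q1 with hi1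
  set i2 := inc v0 (v0 - E1) q2 with hi2
  set i3 := inc v0 (v0 + E2) q3 with hi3
  set i4 := inc v0 (v0 - E2) q4 with hi4
  set i5 := inc (v0 + E1) v0 q1.symm with hi5
  have a12 := adj_same_vertex q1 q2 d12
  have a13 := adj_same_vertex q1 q3 d13
  have a14 := adj_same_vertex q1 q4 d14
  have a23 := adj_same_vertex q2 q3 d23
  have a24 := adj_same_vertex q2 q4 d24
  have a34 := adj_same_vertex q3 q4 d34
  have a51 := adj_point q1.symm q1
  have a52 := adj_point q1.symm q2
  have a53 := adj_point q1.symm q3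
  have a54 := adj_point q1.symm q4
  intro hfree
  apply hfree {i1, i2, i3, i4, i5}
  constructor
  · -- clique
    intro a ha b hb hab
    simp only [Finset.coe_insert, Set.mem_insert_iff, Finset.coe_singleton,
      Set.mem_singleton_iff] at ha hb
    rcases ha with rfl | rfl | rfl | rfl | rfl <;> rcases hb with rfl | rfl | rfl | rfl | rfl <;>
      first
        | exact absurd rfl hab
        | exact a12 | exact a13 | exact a14 | exact a23 | exact a24 | exact a34
        | exact a12.symm | exact a13.symm | exact a14.symm | exact a23.symm
        | exact a24.symm | exact a34.symm
        | exact a51 | exact a52 | exact a53 | exact a54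
        | exact a51.symm | exact a52.symm | exact a53.symm | exact a54.symm
  · -- card
    have n12 : i1 ≠ i2 := a12.1
    have n13 : i1 ≠ i3 := a13.1
    have n14 : i1 ≠ i4 := a14.1
    have n15 : i1 ≠ i5 := fun h => a51.1 h.symm
    have n23 : i2 ≠ i3 := a23.1
    have n24 : i2 ≠ i4 := a24.1
    have n25 : i2 ≠ i5 := fun h => a52.1 h.symm
    have n34 : i3 ≠ i4 := a34.1
    have n35 : i3 ≠ i5 := fun h => a53.1 h.symm
    have n45 : i4 ≠ i5 := fun h => a54.1 h.symm
    rw [show ({i1, i2, i3, i4, i5} : Finset _)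
        = insert i1 (insert i2 (insert i3 (insert i4 {i5}))) from rfl]
    rw [Finset.card_insert_of_notMem (by simp [n12, n13, n14, n15]),
      Finset.card_insert_of_notMem (by simp [n23, n24, n25]),
      Finset.card_insert_of_notMem (by simp [n34, n35]),
      Finset.card_insert_of_notMem (by simp [n45])]
    simp

lemma five_le_chrom :
    (5 : ℕ∞) ≤ (incidenceGraph (toroidalGrid (m+3) (n+3))).chromaticNumber := by
  by_contra h
  push_neg at h
  have h5 : (incidenceGraph (toroidalGrid (m+3) (n+3))).chromaticNumber < ((5:ℕ) : ℕ∞) := by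
    exact_mod_cast h
  exact not_cliqueFree (SimpleGraph.cliqueFree_of_chromaticNumber_lt h5)

end LB

end IncAux

theorem incidence_chromatic_toroidal_grid_ge_five (m n : ℕ) (hm : 3 ≤ m) (hn : 3 ≤ n) :
    5 ≤ incidenceChromaticNumber (toroidalGrid m n) ∧
      (incidenceChromaticNumber (toroidalGrid m n) = 5 ↔ (m % 5 = 0 ∧ n % 5 = 0)) := by
  obtain ⟨m', rfl⟩ : ∃ k, m = k + 3 := ⟨m - 3, by omega⟩
  obtain ⟨n', rfl⟩ : ∃ k, n = k + 3 := ⟨n - 3, by omega⟩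
  have hlb : (5 : ℕ∞) ≤ incidenceChromaticNumber (toroidalGrid (m'+3) (n'+3)) :=
    IncAux.five_le_chrom
  refine ⟨hlb, ?_, ?_⟩
  · intro h
    have hle : (incidenceGraph (toroidalGrid (m'+3) (n'+3))).chromaticNumber ≤ ((5:ℕ) : ℕ∞) := by
      rw [incidenceChromaticNumber] at h
      rw [h]
      norm_num
    have hc := SimpleGraph.chromaticNumber_le_iff_colorable.mp hle
    obtain ⟨C⟩ := hc
    exact IncAux.fwd C
  · rintro ⟨hm5, hn5⟩
    have hc := IncAux.colorable_of_dvd (Nat.dvd_of_mod_eq_zero hm5) (Nat.dvd_of_mod_eq_zero hn5)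
    have hle : incidenceChromaticNumber (toroidalGrid (m'+3) (n'+3)) ≤ (5 : ℕ∞) := by
      have := hc.chromaticNumber_le
      rw [incidenceChromaticNumber]
      exact_mod_cast this
    exact le_antisymm hle hlb
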